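/- The point 4P = (-b/a, -a - b(Ka+b)/(a(a²-b))) lies on the Lyness curve xy(x+y) + a(x+y)² + (a²+b)(x+y) + ab - K·xy = 0, provided a ≠ 0 and a² ≠ b. -/

import Mathlib

/-- The point `4P = (-b/a, -a - b(Ka+b)/(a(a²-b)))` lies on the Lyness curve. -/
theorem lyness_fourP_on_curve {F : Type*} [Field F] (a b K : F)
    (ha : a ≠ 0) (hab : a ^ 2 - b ≠ 0) :
    let x : F := -b / a
    let y : F := -a - b * (K * a + b) / (a * (a ^ 2 - b))
    x * y * (x + y) + a * (x + y) ^ 2 + (a ^ 2 + b) * (x + y) + a * b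
      - K * (x * y) = 0 := by
  intro x y
  have hd : a * (a ^ 2 - b) ≠ 0 := mul_ne_zero ha hab
  set d : F := a * (a ^ 2 - b) with hd_def
  set e : F := -(a * d) - b * (K * a + b) with he_def
  have hx : a * x = -b := by
    simp only [x]
    field_simp
  have hy : d * y = e := by
    simp only [y, he_def]
    field_simp
    rw [hd_def]
    ring
  clear_value x y
  have key : a ^ 2 * d ^ 2 *
      (x * y * (x + y) + a * (x + y) ^ 2 + (a ^ 2 + b) * (x + y) + a * b
        - K * (x * y)) = 0 := by
    linear_combination
      (((x + a) * (d * y + e)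
          + (x ^ 2 + (2 * a - K) * x + a ^ 2 + b) * d) * a ^ 2) * hy
      + ((-b * (K * a + b) * d) * (a * x - b)
          + (e ^ 2 + (2 * a - K) * d * e + (a ^ 2 + b) * d ^ 2) * a) * hx
  have h2 : a ^ 2 * d ^ 2 ≠ 0 := mul_ne_zero (pow_ne_zero _ ha) (pow_ne_zero _ hd)
  exact (mul_eq_zero.mp key).resolve_left h2
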